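/- For real x₁, …, xₙ and α₁, …, αₙ, the n×n determinant det(e^{i xᵢ αⱼ}) satisfies det(e^{i xᵢ αⱼ}) = exp(i·(Σⱼ xⱼ)(Σₖ αₖ)/n) · Σ_{P ∈ Sₙ} ε_P ∏_{j=1}^{n−1} exp( i·(xⱼ − xⱼ₊₁)·( Σ_{k=1}^{j} α_{P(k)} − (j/n)·Σ_{k=1}^{n} αₖ ) ). -/

import Mathlib

open Matrix Complex Finset

lemma fin_sum_Iic (m : ℕ) (f : ℕ → ℂ) (i : Fin (m + 1)) :
    ∑ k ∈ Finset.Iic i, f ↑k = ∑ k ∈ Finset.range (↑i + 1), f k := by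
  have h : Finset.Iic (i : ℕ) = Finset.range (↑i + 1) := by
    ext k; simp [Nat.lt_succ_iff]
  rw [← h, ← Fin.map_valEmbedding_Iic, Finset.sum_map]
  rfl

lemma abel_aux (m : ℕ) (f : ℕ → ℂ) :
    ∑ j ∈ range m, (f j - f (j + 1)) * (j + 1) =
      (∑ j ∈ range (m + 1), f j) - (m + 1) * f m := by
  induction m with
  | zero => simp
  | succ n ih =>
    rw [Finset.sum_range_succ, ih, Finset.sum_range_succ (n := n + 1)]
    push_cast
    ring

lemma key (m : ℕ) (f g : ℕ → ℂ) :
    ∑ i ∈ range (m + 1), f i * g i =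
      (∑ i ∈ range (m + 1), f i) * (∑ i ∈ range (m + 1), g i) / (m + 1) +
        ∑ j ∈ range m, (f j - f (j + 1)) *
          ((∑ k ∈ range (j + 1), g k) - ((↑j + 1) / (↑m + 1)) * ∑ i ∈ range (m + 1), g i) := by
  have hbp := Finset.sum_range_by_parts f g (m + 1)
  simp only [smul_eq_mul, Nat.add_sub_cancel] at hbp
  have hsplit : ∑ j ∈ range m, (f j - f (j + 1)) *
      ((∑ k ∈ range (j + 1), g k) - ((↑j + 1) / (↑m + 1)) * ∑ i ∈ range (m + 1), g i)
      = (∑ j ∈ range m, (f j - f (j + 1)) * ∑ k ∈ range (j + 1), g k)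
        - (∑ j ∈ range m, (f j - f (j + 1)) * (↑j + 1)) *
            ((∑ i ∈ range (m + 1), g i) / (↑m + 1)) := by
    rw [Finset.sum_mul, ← Finset.sum_sub_distrib]
    exact Finset.sum_congr rfl fun j _ => by ring
  have hneg : ∑ j ∈ range m, (f j - f (j + 1)) * ∑ k ∈ range (j + 1), g k
      = -(∑ j ∈ range m, (f (j + 1) - f j) * ∑ k ∈ range (j + 1), g k) := by
    rw [← Finset.sum_neg_distrib]
    exact Finset.sum_congr rfl fun j _ => by ring
  have hne : ((m : ℂ) + 1) ≠ 0 := Nat.cast_add_one_ne_zero m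
  rw [hsplit, hneg, _root_.abel_aux, hbp]
  field_simp
  ring

lemma key' (m : ℕ) (f g : ℕ → ℂ) :
    ∑ i ∈ range (m + 1), Complex.I * f i * g i =
      Complex.I * (∑ i ∈ range (m + 1), f i) * (∑ i ∈ range (m + 1), g i) / (m + 1) +
        ∑ j ∈ range m, Complex.I * (f j - f (j + 1)) *
          ((∑ k ∈ range (j + 1), g k) - ((↑j + 1) / (↑m + 1)) * ∑ i ∈ range (m + 1), g i) := by
  simp only [mul_assoc, ← Finset.mul_sum]
  rw [key]
  ring

/-- Factorization of the HCIZ determinant `det(e^{i xᵢ αⱼ})` into center-of-mass and relative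
variables (here `n = m + 1`, indices `0`-based: paper index `j` is `j + 1`). -/
theorem hciz_det_factorization (m : ℕ) (x α : Fin (m + 1) → ℝ) :
    (Matrix.of fun k l : Fin (m + 1) => Complex.exp (Complex.I * x k * α l)).det =
      Complex.exp (Complex.I * (∑ j, (x j : ℂ)) * (∑ k, (α k : ℂ)) / (m + 1)) *
        ∑ P : Equiv.Perm (Fin (m + 1)), (Equiv.Perm.sign P : ℂ) *
          ∏ j : Fin m,
            Complex.exp (Complex.I * ((x j.castSucc : ℂ) - (x j.succ : ℂ)) *
              ((∑ k ∈ Finset.Iic (j.castSucc : Fin (m + 1)), (α (P k) : ℂ)) -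
                (((j : ℕ) + 1 : ℂ) / (m + 1)) * ∑ k, (α k : ℂ))) := by
  rw [← Matrix.det_transpose, Matrix.det_apply', Finset.mul_sum]
  refine Finset.sum_congr rfl fun σ _ => ?_
  simp only [Matrix.transpose_apply, Matrix.of_apply]
  -- per-permutation exponent identity
  set F : ℕ → ℂ := fun k => if h : k < m + 1 then (x ⟨k, h⟩ : ℂ) else 0 with hFdef
  set G : ℕ → ℂ := fun k => if h : k < m + 1 then (α (σ ⟨k, h⟩) : ℂ) else 0 with hGdef
  have hF : ∀ i : Fin (m + 1), F ↑i = (x i : ℂ) := fun i => by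
    simp [hFdef, i.is_lt, Nat.not_lt.mpr i.is_le]
  have hG : ∀ i : Fin (m + 1), G ↑i = (α (σ i) : ℂ) := fun i => by
    simp [hGdef, i.is_lt, Nat.not_lt.mpr i.is_le]
  have hFsum : ∑ i ∈ range (m + 1), F i = ∑ j, (x j : ℂ) := by
    rw [← Fin.sum_univ_eq_sum_range F (m + 1)]
    exact Finset.sum_congr rfl fun i _ => hF i
  have hGsum : ∑ i ∈ range (m + 1), G i = ∑ k, (α k : ℂ) := by
    rw [← Fin.sum_univ_eq_sum_range G (m + 1)]
    rw [show (∑ i : Fin (m + 1), G ↑i) = ∑ i : Fin (m + 1), (α (σ i) : ℂ) from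
      Finset.sum_congr rfl fun i _ => hG i]
    exact Equiv.sum_comp σ fun k => (α k : ℂ)
  have hexp : ∑ i : Fin (m + 1), Complex.I * (x i : ℂ) * (α (σ i) : ℂ) =
      Complex.I * (∑ j, (x j : ℂ)) * (∑ k, (α k : ℂ)) / (m + 1) +
        ∑ j : Fin m, Complex.I * ((x j.castSucc : ℂ) - (x j.succ : ℂ)) *
          ((∑ k ∈ Finset.Iic (j.castSucc : Fin (m + 1)), (α (σ k) : ℂ)) -
            (((j : ℕ) + 1 : ℂ) / (m + 1)) * ∑ k, (α k : ℂ)) := by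
    have h1 : ∑ i : Fin (m + 1), Complex.I * (x i : ℂ) * (α (σ i) : ℂ) =
        ∑ i ∈ range (m + 1), Complex.I * F i * G i := by
      rw [← Fin.sum_univ_eq_sum_range (fun i => Complex.I * F i * G i) (m + 1)]
      exact Finset.sum_congr rfl fun i _ => by rw [hF i, hG i]
    have h2 : ∑ j : Fin m, Complex.I * ((x j.castSucc : ℂ) - (x j.succ : ℂ)) *
          ((∑ k ∈ Finset.Iic (j.castSucc : Fin (m + 1)), (α (σ k) : ℂ)) -
            (((j : ℕ) + 1 : ℂ) / (m + 1)) * ∑ k, (α k : ℂ)) =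
        ∑ j ∈ range m, Complex.I * (F j - F (j + 1)) *
          ((∑ k ∈ range (j + 1), G k) - ((↑j + 1) / (↑m + 1)) * ∑ i ∈ range (m + 1), G i) := by
      rw [← Fin.sum_univ_eq_sum_range (fun j => Complex.I * (F j - F (j + 1)) *
          ((∑ k ∈ range (j + 1), G k) - ((↑j + 1) / (↑m + 1)) * ∑ i ∈ range (m + 1), G i)) m]
      refine Finset.sum_congr rfl fun j _ => ?_
      have e1 : F ↑j = (x j.castSucc : ℂ) := by
        rw [← hF j.castSucc]; rfl
      have e2 : F (↑j + 1) = (x j.succ : ℂ) := by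
        rw [← hF j.succ]; rfl
      have e3 : ∑ k ∈ range (↑j + 1), G k =
          ∑ k ∈ Finset.Iic (j.castSucc : Fin (m + 1)), (α (σ k) : ℂ) := by
        have hs := fin_sum_Iic m G j.castSucc
        rw [Fin.coe_castSucc] at hs
        rw [← hs]
        exact Finset.sum_congr rfl fun k _ => hG k
      rw [e1, e2, e3, hGsum]
    rw [h1, h2, key' m F G, hFsum, hGsum]
  -- now the product manipulation
  have hprod : ∏ i : Fin (m + 1), Complex.exp (Complex.I * (x i : ℂ) * (α (σ i) : ℂ)) =
      Complex.exp (Complex.I * (∑ j, (x j : ℂ)) * (∑ k, (α k : ℂ)) / (m + 1)) *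
        ∏ j : Fin m,
          Complex.exp (Complex.I * ((x j.castSucc : ℂ) - (x j.succ : ℂ)) *
            ((∑ k ∈ Finset.Iic (j.castSucc : Fin (m + 1)), (α (σ k) : ℂ)) -
              (((j : ℕ) + 1 : ℂ) / (m + 1)) * ∑ k, (α k : ℂ))) := by
    rw [← Complex.exp_sum, ← Complex.exp_sum, ← Complex.exp_add, hexp]
  rw [hprod]
  ring
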